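/- Let A, B be invertible elements of an associative unital ring R satisfying the fundamental relation, C = A⁻¹B⁻¹A(1-A), D = 1 - A⁻¹B⁻¹AB, and let S₁ = [[A,B,0],[C,D,0],[0,0,1]] and S₂ = [[1,0,0],[0,A,B],[0,C,D]] in M₃(R). Then S₁S₂S₁ = S₂S₁S₂ (the braid relation). -/
import Mathlib

set_option maxHeartbeats 1600000 in
theorem braid_aux' (R : Type) [Ring R] (a b a' b' : R)
    (ha : a * a' = 1) (ha' : a' * a = 1) (hb : b * b' = 1) (hb' : b' * b = 1)
    (hfund : a' * b' * a * b - b' * a * b = b * a' * b' * a - a) :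
    (!![a, b, 0; a'*b'*a*(1-a), 1 - a'*b'*a*b, 0; 0, 0, 1] *
     !![1, 0, 0; 0, a, b; 0, a'*b'*a*(1-a), 1 - a'*b'*a*b] *
     !![a, b, 0; a'*b'*a*(1-a), 1 - a'*b'*a*b, 0; 0, 0, 1]) =
    (!![1, 0, 0; 0, a, b; 0, a'*b'*a*(1-a), 1 - a'*b'*a*b] *
     !![a, b, 0; a'*b'*a*(1-a), 1 - a'*b'*a*b, 0; 0, 0, 1] *
     !![1, 0, 0; 0, a, b; 0, a'*b'*a*(1-a), 1 - a'*b'*a*b]) := by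
  have sA : ∀ x : R, a * (a' * x) = x := fun x => by rw [← mul_assoc, ha, one_mul]
  have sA' : ∀ x : R, a' * (a * x) = x := fun x => by rw [← mul_assoc, ha', one_mul]
  have sB : ∀ x : R, b * (b' * x) = x := fun x => by rw [← mul_assoc, hb, one_mul]
  have sB' : ∀ x : R, b' * (b * x) = x := fun x => by rw [← mul_assoc, hb', one_mul]
  have hE : b * (a' * (b' * a)) = a' * (b' * (a * b)) - b' * (a * b) + a := by
    have h := hfund; simp only [mul_assoc] at h; linear_combination (norm := noncomm_ring) -h
  have hE' : ∀ x : R, b * (a' * (b' * (a * x))) =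
      a' * (b' * (a * (b * x))) - b' * (a * (b * x)) + a * x := by
    intro x
    have h := congrArg (fun y => y * x) hE
    simp only [sub_mul, add_mul, mul_assoc] at h
    exact h
  rw [Matrix.mul_fin_three, Matrix.mul_fin_three, Matrix.mul_fin_three, Matrix.mul_fin_three]
  simp only [mul_zero, zero_mul, mul_one, one_mul, add_zero, zero_add]
  ext i j
  fin_cases i <;> fin_cases j <;>
    simp only [Fin.zero_eta, Fin.mk_one, Fin.reduceFinMk, Matrix.cons_val_zero,
      Matrix.cons_val_one, Matrix.head_cons, Matrix.cons_val_two, Matrix.tail_cons,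
      Matrix.cons_val', Matrix.empty_val', Matrix.cons_val_fin_one, Matrix.head_fin_const,
      Matrix.of_apply] <;>
    simp only [sub_mul, mul_sub, add_mul, mul_add, one_mul, mul_one, mul_zero, zero_mul,
      add_zero, zero_add, sub_zero, zero_sub, mul_assoc, sA, sA', sB, sB', hE', hE] <;>
    noncomm_ring

/-- For units `A, B` of a ring `R` satisfying the fundamental relation, with
`C = A⁻¹B⁻¹A(1-A)` and `D = 1 - A⁻¹B⁻¹AB`, the `3×3` matrices
`S₁ = [[A,B,0],[C,D,0],[0,0,1]]` and `S₂ = [[1,0,0],[0,A,B],[0,C,D]]`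
satisfy the braid relation `S₁S₂S₁ = S₂S₁S₂`. -/
theorem braid_relation (R : Type) [Ring R] (A B : Rˣ)
    (hfund : ((A⁻¹ : Rˣ) : R) * ((B⁻¹ : Rˣ) : R) * (A : R) * (B : R) -
        ((B⁻¹ : Rˣ) : R) * (A : R) * (B : R) =
      (B : R) * ((A⁻¹ : Rˣ) : R) * ((B⁻¹ : Rˣ) : R) * (A : R) - (A : R)) :
    (!![(A : R), (B : R), 0;
        ((A⁻¹ : Rˣ) : R) * ((B⁻¹ : Rˣ) : R) * (A : R) * (1 - (A : R)),
        1 - ((A⁻¹ : Rˣ) : R) * ((B⁻¹ : Rˣ) : R) * (A : R) * (B : R), 0;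
        0, 0, 1] *
     !![1, 0, 0;
        0, (A : R), (B : R);
        0, ((A⁻¹ : Rˣ) : R) * ((B⁻¹ : Rˣ) : R) * (A : R) * (1 - (A : R)),
        1 - ((A⁻¹ : Rˣ) : R) * ((B⁻¹ : Rˣ) : R) * (A : R) * (B : R)] *
     !![(A : R), (B : R), 0;
        ((A⁻¹ : Rˣ) : R) * ((B⁻¹ : Rˣ) : R) * (A : R) * (1 - (A : R)),
        1 - ((A⁻¹ : Rˣ) : R) * ((B⁻¹ : Rˣ) : R) * (A : R) * (B : R), 0;
        0, 0, 1]) =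
    (!![1, 0, 0;
        0, (A : R), (B : R);
        0, ((A⁻¹ : Rˣ) : R) * ((B⁻¹ : Rˣ) : R) * (A : R) * (1 - (A : R)),
        1 - ((A⁻¹ : Rˣ) : R) * ((B⁻¹ : Rˣ) : R) * (A : R) * (B : R)] *
     !![(A : R), (B : R), 0;
        ((A⁻¹ : Rˣ) : R) * ((B⁻¹ : Rˣ) : R) * (A : R) * (1 - (A : R)),
        1 - ((A⁻¹ : Rˣ) : R) * ((B⁻¹ : Rˣ) : R) * (A : R) * (B : R), 0;
        0, 0, 1] *
     !![1, 0, 0;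
        0, (A : R), (B : R);
        0, ((A⁻¹ : Rˣ) : R) * ((B⁻¹ : Rˣ) : R) * (A : R) * (1 - (A : R)),
        1 - ((A⁻¹ : Rˣ) : R) * ((B⁻¹ : Rˣ) : R) * (A : R) * (B : R)]) := by
  exact braid_aux' R (A : R) (B : R) ((A⁻¹ : Rˣ) : R) ((B⁻¹ : Rˣ) : R)
    (Units.mul_inv A) (Units.inv_mul A) (Units.mul_inv B) (Units.inv_mul B) hfund
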